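/- Let G be a finite group acting by ring automorphisms on a commutative ring A with |G| invertible in A, and let J₁, J₂ ⊆ A be G-invariant ideals with J₁ + J₂ = A. Then (J₁ ∩ A^G) + (J₂ ∩ A^G) = A^G. In particular, disjoint closed G-invariant subschemes of Spec A have disjoint images in Spec A^G. -/
import Mathlib


/-- The subring of `G`-invariant elements of `A`. -/
def fixedSubring (G A : Type*) [Monoid G] [CommRing A] [MulSemiringAction G A] : Subring A where
  carrier := {a | ∀ g : G, g • a = a}
  mul_mem' := by intro a b ha hb g; rw [smul_mul', ha g, hb g]
  one_mem' := fun g => smul_one g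
  add_mem' := by intro a b ha hb g; rw [smul_add, ha g, hb g]
  zero_mem' := fun g => smul_zero g
  neg_mem' := by intro a ha g; rw [smul_neg, ha g]

section Reynolds

variable {G A : Type*} [Group G] [Fintype G] [CommRing A] [MulSemiringAction G A]
  [Invertible ((Fintype.card G : A))]

lemma smul_invOf_card (g : G) : g • (⅟(Fintype.card G : A)) = ⅟(Fintype.card G : A) := by
  have h1 : g • (⅟(Fintype.card G : A)) * (Fintype.card G : A) = 1 := by
    have : g • ((⅟(Fintype.card G : A)) * (Fintype.card G : A)) = 1 := by
      rw [invOf_mul_self, smul_one]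
    rwa [smul_mul', show g • ((Fintype.card G : A)) = (Fintype.card G : A) from
      map_natCast (MulSemiringAction.toRingHom G A g) _] at this
  exact (invOf_eq_right_inv (by rw [mul_comm] at h1; exact h1)).symm

noncomputable def reynolds (x : A) : A :=
  ⅟(Fintype.card G : A) * ∑ g : G, g • x

lemma reynolds_invariant (x : A) (g : G) : g • (reynolds (G := G) x) = reynolds (G := G) x := by
  unfold reynolds
  rw [smul_mul', smul_invOf_card, Finset.smul_sum]
  congr 1
  exact Fintype.sum_equiv (Equiv.mulLeft g) (fun h => g • h • x) (fun h => h • x)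
    (fun h => by simp [mul_smul])

lemma reynolds_mem (J : Ideal A) (hJ : ∀ (g : G), ∀ a ∈ J, g • a ∈ J) (x : A) (hx : x ∈ J) :
    reynolds (G := G) x ∈ J :=
  J.mul_mem_left _ (Ideal.sum_mem J fun g _ => hJ g x hx)

lemma reynolds_add (x y : A) :
    reynolds (G := G) (x + y) = reynolds (G := G) x + reynolds (G := G) y := by
  unfold reynolds
  rw [← mul_add, ← Finset.sum_add_distrib]
  simp [smul_add]

lemma reynolds_one : reynolds (G := G) (1 : A) = 1 := by
  unfold reynolds
  simp [Finset.card_univ, invOf_mul_self]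

end Reynolds

/-- Separation: if `G`-invariant ideals `J₁, J₂` satisfy `J₁ + J₂ = A`, then
`(J₁ ∩ A^G) + (J₂ ∩ A^G) = A^G`. -/
theorem contraction_comaximal (G A : Type*) [Group G] [Fintype G] [CommRing A]
    [MulSemiringAction G A] [Invertible ((Fintype.card G : A))]
    (J₁ J₂ : Ideal A) (hJ₁ : ∀ (g : G), ∀ a ∈ J₁, g • a ∈ J₁)
    (hJ₂ : ∀ (g : G), ∀ a ∈ J₂, g • a ∈ J₂) (h : J₁ ⊔ J₂ = ⊤) :
    J₁.comap (fixedSubring G A).subtype ⊔ J₂.comap (fixedSubring G A).subtype = ⊤ := by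
  rw [Ideal.eq_top_iff_one]
  obtain ⟨x, hx, y, hy, hxy⟩ := Submodule.mem_sup.mp (h ▸ Submodule.mem_top :
    (1 : A) ∈ J₁ ⊔ J₂)
  refine Submodule.mem_sup.mpr ⟨⟨reynolds (G := G) x, reynolds_invariant x⟩,
    reynolds_mem J₁ hJ₁ x hx, ⟨reynolds (G := G) y, reynolds_invariant y⟩,
    reynolds_mem J₂ hJ₂ y hy, ?_⟩
  ext
  show reynolds (G := G) x + reynolds (G := G) y = 1
  rw [← reynolds_add, hxy, reynolds_one]
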